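/- Let G be any group. If there exist nonzero a, b ∈ ℂG with ab = 0, then there exist nonzero A, B ∈ ℚ̄G with AB = 0. (In other words, if ℚ̄G has no non-trivial zero divisors then neither does ℂG.) -/

import Mathlib

set_option synthInstance.maxHeartbeats 1000000
set_option maxHeartbeats 2000000

open MonoidAlgebra Finsupp

/-- Map on monoid algebras induced by a ring hom on coefficients. -/
noncomputable def coeffMap {k R : Type*} [Semiring k] [Semiring R] (G : Type*) [Monoid G]
    (ψ : k →+* R) : MonoidAlgebra k G →+* MonoidAlgebra R G :=
  MonoidAlgebra.liftNCRingHom ((MonoidAlgebra.singleOneRingHom).comp ψ)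
    (MonoidAlgebra.of R G) (fun x y => by
      simpa only [RingHom.coe_comp, Function.comp_apply, MonoidAlgebra.singleOneRingHom_apply,
        MonoidAlgebra.of_apply, ZeroHom.toFun_eq_coe, AddMonoidHom.toZeroHom_coe,
        MonoidAlgebra.singleAddHom_apply] using
        MonoidAlgebra.single_commute_single (Commute.one_left y) (Commute.one_right (ψ x)))

theorem coeffMap_single {k R : Type*} [Semiring k] [Semiring R] (G : Type*) [Monoid G]
    (ψ : k →+* R) (g : G) (r : k) :
    coeffMap G ψ (MonoidAlgebra.single g r) = MonoidAlgebra.single g (ψ r) := by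
  show MonoidAlgebra.liftNC
      ((MonoidAlgebra.singleOneRingHom.comp ψ) : k →+* MonoidAlgebra R G).toAddMonoidHom
    (MonoidAlgebra.of R G) (MonoidAlgebra.single g r) = _
  rw [MonoidAlgebra.liftNC_single]
  simp only [RingHom.toAddMonoidHom_eq_coe, AddMonoidHom.coe_coe, RingHom.coe_comp,
    Function.comp_apply, MonoidAlgebra.singleOneRingHom_apply, MonoidAlgebra.of_apply,
    ZeroHom.toFun_eq_coe, AddMonoidHom.toZeroHom_coe, MonoidAlgebra.singleAddHom_apply]
  rw [MonoidAlgebra.single_mul_single, one_mul, mul_one]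

theorem coeffMap_apply {k R : Type*} [Semiring k] [Semiring R] (G : Type*) [Monoid G]
    (ψ : k →+* R) (f : MonoidAlgebra k G) (g : G) :
    (coeffMap G ψ f).coeff g = ψ (f.coeff g) := by
  have : (coeffMap G ψ f).coeff = Finsupp.mapRange ψ ψ.map_zero f.coeff := by
    induction f using MonoidAlgebra.induction_linear with
    | zero => simp [map_zero]
    | add f g hf hg =>
      rw [map_add, MonoidAlgebra.coeff_add, MonoidAlgebra.coeff_add,
        Finsupp.mapRange_add ψ.map_add, hf, hg]
    | single g r =>
      rw [coeffMap_single, MonoidAlgebra.coeff_single, MonoidAlgebra.coeff_single,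
        Finsupp.mapRange_single]
  rw [this]; exact Finsupp.mapRange_apply

/-- Any finitely generated `ℚ`-subdomain of `ℂ` admits a specialization into the algebraic
numbers which is nonzero at any prescribed nonzero element. -/
lemma exists_specialization (R : Type*) [CommRing R] [IsDomain R] [Algebra ℚ R]
    [Algebra.FiniteType ℚ R] (c : R) (hc : c ≠ 0) :
    ∃ ψ : R →+* ℂ, (∀ r, IsAlgebraic ℚ (ψ r)) ∧ ψ c ≠ 0 := by
  have hinj : Function.Injective (algebraMap R (Localization.Away c)) := by
    apply IsLocalization.injective (M := Submonoid.powers c)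
    intro x hx
    obtain ⟨n, rfl⟩ := hx
    exact mem_nonZeroDivisors_of_ne_zero (pow_ne_zero _ hc)
  have : Nontrivial (Localization.Away c) := hinj.nontrivial
  obtain ⟨m, hm⟩ := Ideal.exists_maximal (Localization.Away c)
  haveI := hm
  letI : Field (Localization.Away c ⧸ m) := Ideal.Quotient.field m
  haveI : Algebra.FinitePresentation R (Localization.Away c) :=
    IsLocalization.Away.finitePresentation c
  haveI : Algebra.FiniteType R (Localization.Away c) :=
    Algebra.FiniteType.of_finitePresentation
  haveI : Algebra.FiniteType ℚ (Localization.Away c) :=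
    Algebra.FiniteType.trans ‹Algebra.FiniteType ℚ R› ‹_›
  haveI : Algebra.FiniteType ℚ (Localization.Away c ⧸ m) :=
    Algebra.FiniteType.of_surjective
      (Ideal.Quotient.mkₐ ℚ m) Ideal.Quotient.mk_surjective
  haveI := finite_of_finite_type_of_isJacobsonRing ℚ (Localization.Away c ⧸ m)
  haveI : Algebra.IsAlgebraic ℚ (Localization.Away c ⧸ m) := Algebra.IsAlgebraic.of_finite ℚ _
  let ι : (Localization.Away c ⧸ m) →ₐ[ℚ] ℂ := IsAlgClosed.lift
  refine ⟨(ι.toRingHom.comp (Ideal.Quotient.mk m)).comp (algebraMap R (Localization.Away c)),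
    fun r => (Algebra.IsAlgebraic.isAlgebraic
      ((Ideal.Quotient.mk m) (algebraMap R (Localization.Away c) r))).algHom ι, ?_⟩
  have hu : IsUnit (algebraMap R (Localization.Away c) c) :=
    IsLocalization.map_units (Localization.Away c)
      (⟨c, Submonoid.mem_powers c⟩ : Submonoid.powers c)
  have h2 : IsUnit ((ι.toRingHom.comp (Ideal.Quotient.mk m))
      (algebraMap R (Localization.Away c) c)) := hu.map _
  simpa [RingHom.comp_apply] using h2.ne_zero

/-- If the complex group algebra `ℂG` has non-trivial zero divisors, then
already the group algebra `ℚ̄G` over the algebraic numbers (modelled as elements of `ℂG`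
all of whose coefficients are algebraic over `ℚ`) has non-trivial zero divisors. -/
theorem zero_divisors_descend_to_algebraic_numbers
    (G : Type*) [Group G]
    (a b : MonoidAlgebra ℂ G) (ha : a ≠ 0) (hb : b ≠ 0) (hab : a * b = 0) :
    ∃ A B : MonoidAlgebra ℂ G,
      (∀ g : G, IsAlgebraic ℚ (A.coeff g)) ∧ (∀ g : G, IsAlgebraic ℚ (B.coeff g)) ∧
      A ≠ 0 ∧ B ≠ 0 ∧ A * B = 0 := by
  classical
  obtain ⟨g₀, hg₀⟩ : ∃ g, a.coeff g ≠ 0 := by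
    by_contra h; push_neg at h; exact ha (MonoidAlgebra.ext (Finsupp.ext h))
  obtain ⟨h₀, hh₀⟩ : ∃ g, b.coeff g ≠ 0 := by
    by_contra h; push_neg at h; exact hb (MonoidAlgebra.ext (Finsupp.ext h))
  set s : Finset ℂ := a.coeff.support.image a.coeff ∪ b.coeff.support.image b.coeff with hs
  have haR : ∀ g : G, a.coeff g ∈ Algebra.adjoin ℚ (s : Set ℂ) := by
    intro g
    by_cases h : g ∈ a.coeff.support
    · exact Algebra.subset_adjoin (by
        simp only [hs, Finset.coe_union, Set.mem_union, Finset.coe_image]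
        exact Or.inl ⟨g, h, rfl⟩)
    · simp only [Finsupp.notMem_support_iff] at h
      rw [h]; exact zero_mem _
  have hbR : ∀ g : G, b.coeff g ∈ Algebra.adjoin ℚ (s : Set ℂ) := by
    intro g
    by_cases h : g ∈ b.coeff.support
    · exact Algebra.subset_adjoin (by
        simp only [hs, Finset.coe_union, Set.mem_union, Finset.coe_image]
        exact Or.inr ⟨g, h, rfl⟩)
    · simp only [Finsupp.notMem_support_iff] at h
      rw [h]; exact zero_mem _
  haveI : Algebra.FiniteType ℚ (Algebra.adjoin ℚ (s : Set ℂ)) :=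
    (Subalgebra.fg_iff_finiteType _).mp (Subalgebra.fg_adjoin_finset s)
  set c : Algebra.adjoin ℚ (s : Set ℂ) := ⟨a.coeff g₀, haR g₀⟩ * ⟨b.coeff h₀, hbR h₀⟩ with hc
  have hcne : c ≠ 0 := by
    simp only [hc, Ne, ← Subtype.coe_inj]
    push_cast
    exact mul_ne_zero hg₀ hh₀
  obtain ⟨ψ, hψalg, hψc⟩ := exists_specialization _ c hcne
  have hψa : ψ ⟨a.coeff g₀, haR g₀⟩ ≠ 0 := fun h => hψc (by rw [hc, map_mul, h, zero_mul])
  have hψb : ψ ⟨b.coeff h₀, hbR h₀⟩ ≠ 0 := fun h => hψc (by rw [hc, map_mul, h, mul_zero])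
  -- lift a and b to coefficients in the adjoined subalgebra
  let a' : MonoidAlgebra (Algebra.adjoin ℚ (s : Set ℂ)) G :=
    ⟨⟨a.coeff.support, fun g => ⟨a.coeff g, haR g⟩, fun g => by
      simp [Finsupp.mem_support_iff, Ne, Subtype.ext_iff]⟩⟩
  let b' : MonoidAlgebra (Algebra.adjoin ℚ (s : Set ℂ)) G :=
    ⟨⟨b.coeff.support, fun g => ⟨b.coeff g, hbR g⟩, fun g => by
      simp [Finsupp.mem_support_iff, Ne, Subtype.ext_iff]⟩⟩
  set v : (Algebra.adjoin ℚ (s : Set ℂ)) →+* ℂ := (Algebra.adjoin ℚ (s : Set ℂ)).subtype with hv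
  have hva : coeffMap G v a' = a := by
    ext g; rw [coeffMap_apply]; rfl
  have hvb : coeffMap G v b' = b := by
    ext g; rw [coeffMap_apply]; rfl
  have hab' : a' * b' = 0 := by
    have hinjv : Function.Injective (coeffMap G v) := by
      intro x y hxy
      ext g
      have := congrFun (congrArg (fun (f : MonoidAlgebra ℂ G) => (f.coeff : G → ℂ)) hxy) g
      simp only [coeffMap_apply] at this
      exact this
    apply hinjv
    rw [map_mul, hva, hvb, hab, map_zero]
  refine ⟨coeffMap G ψ a', coeffMap G ψ b', ?_, ?_, ?_, ?_, ?_⟩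
  · intro g; rw [coeffMap_apply]; exact hψalg _
  · intro g; rw [coeffMap_apply]; exact hψalg _
  · intro h
    apply hψa
    have := congrFun (congrArg (fun (f : MonoidAlgebra ℂ G) => (f.coeff : G → ℂ)) h) g₀
    simp only [coeffMap_apply, MonoidAlgebra.coeff_zero, Finsupp.coe_zero, Pi.zero_apply] at this
    exact this
  · intro h
    apply hψb
    have := congrFun (congrArg (fun (f : MonoidAlgebra ℂ G) => (f.coeff : G → ℂ)) h) h₀
    simp only [coeffMap_apply, MonoidAlgebra.coeff_zero, Finsupp.coe_zero, Pi.zero_apply] at this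
    exact this
  · rw [← map_mul, hab', map_zero]
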